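/- Let λ be an e-regular partition with e-weight w. Given that d_{m(λ)', λ}(v) = v^w and that nonzero v-decomposition numbers d_{μν}(v) lie in ℕ_0[v²] when σ_e(μ) = σ_e(ν) and in v·ℕ_0[v²] otherwise, it follows that σ_e(m(λ)) = (−1)^{ew} σ_e(λ), where m is the Mullineux involution. -/
import Mathlib


/-- Sign of the Mullineux map.  Let `λ` be an `e`-regular partition of `e`-weight `w`,
`m` the Mullineux involution, `conj` conjugation of partitions, `sgn = σ_e` the
relative `e`-sign, and `d` the `v`-decomposition numbers.  Given
`d_{m(λ)', λ}(v) = v^w`, the parity theorem (nonzero `d_{μν}` lies in `ℕ₀[v²]` when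
`σ_e(μ) = σ_e(ν)` and in `v·ℕ₀[v²]` otherwise), and
`σ_e(m(λ)') = (−1)^{(e−1)w} σ_e(m(λ))`, it follows that
`σ_e(m(λ)) = (−1)^{ew} σ_e(λ)`. -/
theorem mullineux_sign {P : Type} (e w : ℕ) (he : 2 ≤ e)
    (conj m : P → P) (sgn : P → ℤˣ) (d : P → P → Polynomial ℤ) (l : P)
    (hd : d (conj (m l)) l = Polynomial.X ^ w)
    (hparity : ∀ μ ν : P, d μ ν ≠ 0 →
      (sgn μ = sgn ν → ∀ k : ℕ, (d μ ν).coeff k ≠ 0 → Even k) ∧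
      (sgn μ ≠ sgn ν → ∀ k : ℕ, (d μ ν).coeff k ≠ 0 → Odd k))
    (hconj : sgn (conj (m l)) = (-1) ^ ((e - 1) * w) * sgn (m l)) :
    sgn (m l) = (-1) ^ (e * w) * sgn l := by
  have hne : d (conj (m l)) l ≠ 0 := by
    rw [hd]; exact pow_ne_zero _ Polynomial.X_ne_zero
  have hc : (d (conj (m l)) l).coeff w ≠ 0 := by
    rw [hd, Polynomial.coeff_X_pow]; simp
  have key : sgn (conj (m l)) = (-1) ^ w * sgn l := by
    by_cases h : sgn (conj (m l)) = sgn l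
    · have hev : Even w := (hparity _ _ hne).1 h w hc
      rw [h, hev.neg_one_pow, one_mul]
    · have hod : Odd w := (hparity _ _ hne).2 h w hc
      rw [hod.neg_one_pow]
      rcases Int.units_eq_one_or (sgn (conj (m l))) with h1 | h1 <;>
        rcases Int.units_eq_one_or (sgn l) with h2 | h2 <;>
          rw [h1, h2] at h ⊢ <;> first | exact absurd rfl h | decide
  have hmul : ∀ n : ℕ, ((-1 : ℤˣ) ^ n) * ((-1 : ℤˣ) ^ n) = 1 := by
    intro n
    rw [← pow_add]
    exact Even.neg_one_pow ⟨n, rfl⟩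
  have hml : sgn (m l) = (-1) ^ ((e - 1) * w) * sgn (conj (m l)) := by
    rw [hconj, ← mul_assoc, hmul, one_mul]
  rw [hml, key, ← mul_assoc, ← pow_add]
  congr 2
  have h1 : e - 1 + 1 = e := by omega
  calc (e - 1) * w + w = ((e - 1) + 1) * w := by ring
    _ = e * w := by rw [h1]
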